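/- For 0<z<1 and 0<α<1, define Y = (1-√(1-z))/(2√(1-z)) and q(x) = (1-e^{-x})·((Y+1)e^{x} - Y). Then x₀ = log( (1+√(1-(1-α²)z)) / ((1-α)(1+√(1-z))) ) satisfies q(x₀) = α·q'(x₀). -/

import Mathlib

theorem stmt_4 (α z : ℝ) (hα : 0 < α) (hα1 : α < 1) (hz : 0 < z) (hz1 : z < 1) :
    let Y := (1 - Real.sqrt (1 - z)) / (2 * Real.sqrt (1 - z))
    let q := fun x : ℝ => (1 - Real.exp (-x)) * ((Y + 1) * Real.exp x - Y)
    let x₀ := Real.log ((1 + Real.sqrt (1 - (1 - α ^ 2) * z))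
        / ((1 - α) * (1 + Real.sqrt (1 - z))))
    q x₀ = α * deriv q x₀ := by
  intro Y q x₀
  set s := Real.sqrt (1 - z) with hsdef
  set t := Real.sqrt (1 - (1 - α ^ 2) * z) with htdef
  have hs : 0 < s := Real.sqrt_pos.mpr (by linarith)
  have hs2 : s ^ 2 = 1 - z := Real.sq_sqrt (by linarith)
  have ht0 : (0:ℝ) ≤ 1 - (1 - α ^ 2) * z := by nlinarith
  have ht : 0 ≤ t := Real.sqrt_nonneg _
  have ht2 : t ^ 2 = 1 - (1 - α ^ 2) * z := Real.sq_sqrt ht0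
  have hden : 0 < (1 - α) * (1 + s) := by
    apply mul_pos <;> nlinarith
  have harg : 0 < (1 + t) / ((1 - α) * (1 + s)) := by positivity
  have hexp : Real.exp x₀ = (1 + t) / ((1 - α) * (1 + s)) := Real.exp_log harg
  -- derivative of q
  have hd : HasDerivAt q
      (Real.exp (-x₀) * ((Y + 1) * Real.exp x₀ - Y)
        + (1 - Real.exp (-x₀)) * ((Y + 1) * Real.exp x₀)) x₀ := by
    have h1 : HasDerivAt (fun x : ℝ => 1 - Real.exp (-x)) (Real.exp (-x₀)) x₀ := by
      have := ((Real.hasDerivAt_exp (-x₀)).comp x₀ (hasDerivAt_neg x₀)).const_sub 1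
      simpa using this
    have h2 : HasDerivAt (fun x : ℝ => (Y + 1) * Real.exp x - Y)
        ((Y + 1) * Real.exp x₀) x₀ :=
      ((Real.hasDerivAt_exp x₀).const_mul (Y + 1)).sub_const Y
    exact (h1.mul h2).congr_deriv (by ring)
  rw [hd.deriv]
  set E := Real.exp x₀ with hE
  have hEpos : 0 < E := Real.exp_pos _
  have hEn : Real.exp (-x₀) = E⁻¹ := Real.exp_neg _
  have key : (1 - α) * (1 + s) * E ^ 2 - 2 * E + (1 + α) * (1 - s) = 0 := by
    rw [hexp]
    have h1a : (1 - α) ≠ 0 := by linarith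
    have h1s : (1 + s) ≠ 0 := by linarith
    field_simp
    linear_combination ht2 - (1-α^2)*hs2
  have hY : Y = (1 - s) / (2 * s) := rfl
  show (1 - Real.exp (-x₀)) * ((Y + 1) * E - Y)
      = α * (Real.exp (-x₀) * ((Y + 1) * E - Y) + (1 - Real.exp (-x₀)) * ((Y + 1) * E))
  rw [hEn, hY]
  field_simp
  linear_combination key
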